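/- arXiv:2108.00531 — 4 statements merged into one kernel-verified Lean document; each statement's English description precedes it below -/
import Mathlib

section
/- A monomial ideal I in K[x_1,...,x_n] is componentwise polymatroidal if and only if the following exchange condition holds: for all monomials u, v in I with deg(u) ≤ deg(v) and u not dividing v, and for every index i with deg_{x_i}(v) > deg_{x_i}(u), there exists an index j with deg_{x_j}(v) < deg_{x_j}(u) such that x_j·(v/x_i) ∈ I. -/
/-- A monomial in `K[x_1,...,x_n]` is identified with its exponent vector. -/
abbrev Mon (n : ℕ) := Fin n → ℕ

/-- Total degree of a monomial. -/
def degree {n : ℕ} (u : Mon n) : ℕ := ∑ i, u i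

/-- A monomial ideal is identified with the set of exponent vectors of the monomials it
contains; this set is closed under multiplication by monomials. -/
def IsMonomialIdeal {n : ℕ} (I : Set (Mon n)) : Prop :=
  ∀ u ∈ I, ∀ w : Mon n, u + w ∈ I

/-- The minimal monomial generating set `G(I)` of a monomial ideal: monomials of `I`
minimal with respect to divisibility (pointwise `≤` of exponent vectors). -/
def minGens {n : ℕ} (I : Set (Mon n)) : Set (Mon n) :=
  {u | u ∈ I ∧ ∀ v ∈ I, v ≤ u → v = u}

/-- `exch v i j` is the exponent vector of `x_j * (v / x_i)` (for `i ≠ j`). -/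
def exch {n : ℕ} (v : Mon n) (i j : Fin n) : Mon n :=
  fun k => if k = i then v k - 1 else if k = j then v k + 1 else v k

/-- `component I d` is the ideal `I_⟨d⟩` generated by the degree-`d` monomials of `I`. -/
def component {n : ℕ} (I : Set (Mon n)) (d : ℕ) : Set (Mon n) :=
  {w | ∃ u ∈ I, degree u = d ∧ u ≤ w}

/-- `I` is generated in a single degree. -/
def GeneratedInSingleDegree {n : ℕ} (I : Set (Mon n)) : Prop :=
  ∃ d, ∀ u ∈ minGens I, degree u = d

/-- A polymatroidal ideal: generated in a single degree and its generators satisfy the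
exchange property. -/
def IsPolymatroidal {n : ℕ} (I : Set (Mon n)) : Prop :=
  GeneratedInSingleDegree I ∧
  ∀ u ∈ minGens I, ∀ v ∈ minGens I, ∀ i : Fin n, v i < u i →
    ∃ j : Fin n, u j < v j ∧ exch u i j ∈ I

/-- Componentwise polymatroidal: each graded component ideal `I_⟨d⟩` is polymatroidal. -/
def ComponentwisePolymatroidal {n : ℕ} (I : Set (Mon n)) : Prop :=
  ∀ d : ℕ, IsPolymatroidal (component I d)

/-- Non-pure dual exchange property: for `u, v ∈ G(I)` with `deg u ≤ deg v` and
`deg_{x_i} v < deg_{x_i} u` there is `j` with `deg_{x_j} v > deg_{x_j} u` and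
`x_i * (v / x_j) ∈ I`. -/
def NonPureDualExchange {n : ℕ} (I : Set (Mon n)) : Prop :=
  ∀ u ∈ minGens I, ∀ v ∈ minGens I, degree u ≤ degree v →
    ∀ i : Fin n, v i < u i → ∃ j : Fin n, u j < v j ∧ exch v j i ∈ I

/-- Non-pure exchange property: for `u, v ∈ G(I)` with `deg u ≤ deg v` and
`deg_{x_i} v > deg_{x_i} u` there is `j` with `deg_{x_j} v < deg_{x_j} u` and
`x_j * (v / x_i) ∈ I`. -/
def NonPureExchange {n : ℕ} (I : Set (Mon n)) : Prop :=
  ∀ u ∈ minGens I, ∀ v ∈ minGens I, degree u ≤ degree v →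
    ∀ i : Fin n, u i < v i → ∃ j : Fin n, v j < u j ∧ exch v i j ∈ I

/-- The monomial ideal generated by a set `G` of monomials. -/
def genBy {n : ℕ} (G : Set (Mon n)) : Set (Mon n) := {w | ∃ u ∈ G, u ≤ w}

/-- The product of two monomial ideals (as sets of monomials). -/
def mulIdeal {n : ℕ} (I J : Set (Mon n)) : Set (Mon n) :=
  {w | ∃ u ∈ I, ∃ v ∈ J, w = u + v}

/-- The product of a monomial ideal with the monomial `u`. -/
def mulMon {n : ℕ} (u : Mon n) (I : Set (Mon n)) : Set (Mon n) :=
  (fun v => u + v) '' I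

/-- Strong exchange property: for all generators `u, v` and all `i, j` with
`deg_{x_i} u > deg_{x_i} v` and `deg_{x_j} u < deg_{x_j} v`, `x_j * (u / x_i) ∈ I`. -/
def StrongExchange {n : ℕ} (I : Set (Mon n)) : Prop :=
  ∀ u ∈ minGens I, ∀ v ∈ minGens I, ∀ i j : Fin n,
    v i < u i → u j < v j → exch u i j ∈ I

/-- The Veronese type ideal `I_{(d; a_1,...,a_n)}`: generated by all monomials of
degree `d` with `deg_{x_i} ≤ a i` for all `i`. -/
def veronese (n d : ℕ) (a : Fin n → ℕ) : Set (Mon n) :=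
  {w | ∃ u : Mon n, degree u = d ∧ (∀ i, u i ≤ a i) ∧ u ≤ w}

/-- A list of monomials is an admissible order if each colon ideal
`(u_1,...,u_{i-1}) : u_i` is generated by a subset `S` of the variables. -/
def AdmissibleOrder {n : ℕ} (L : List (Mon n)) : Prop :=
  ∀ i : Fin L.length, ∃ S : Set (Fin n),
    ∀ w : Mon n, (w + L.get i ∈ genBy {u | u ∈ L.take i.1}) ↔ ∃ k ∈ S, 1 ≤ w k

/-- `I` has linear quotients: some ordering of `G(I)` is admissible. -/
def HasLinearQuotients {n : ℕ} (I : Set (Mon n)) : Prop :=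
  ∃ L : List (Mon n), L.Nodup ∧ (∀ u, u ∈ L ↔ u ∈ minGens I) ∧ AdmissibleOrder L

/-- `I` can be extended by linear quotients to `J`: `G(I) ⊆ G(J)` and the elements of
`G(J) \ G(I)` can be ordered `v_1,...,v_m` such that each colon ideal
`(G(I), v_1,...,v_i) : v_{i+1}` is generated by a subset of the variables. -/
def ExtendsByLinearQuotients {n : ℕ} (I J : Set (Mon n)) : Prop :=
  I ⊆ J ∧ minGens I ⊆ minGens J ∧
  ∃ L : List (Mon n), L.Nodup ∧ (∀ u, u ∈ L ↔ u ∈ minGens J ∧ u ∉ minGens I) ∧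
    ∀ i : Fin L.length, ∃ S : Set (Fin n),
      ∀ w : Mon n,
        (w + L.get i ∈ genBy (minGens I ∪ {u | u ∈ L.take i.1})) ↔ ∃ k ∈ S, 1 ≤ w k

/-- The minimal generators of `I ⊆ K[x,y]` are `u_i = x^{a i} y^{b i}`, `i = 0,...,m`,
with `a` strictly decreasing, `b` strictly increasing, `a m = 0` and `b 0 = 0`
(so `I` is `(x,y)`-primary). -/
def yxTightGens (m : ℕ) (a b : ℕ → ℕ) (I : Set (Mon 2)) : Prop :=
  (∀ i k : ℕ, i ≤ m → k ≤ m → i < k → a k < a i ∧ b i < b k) ∧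
  a m = 0 ∧ b 0 = 0 ∧
  minGens I = {u | ∃ i ≤ m, u = ![a i, b i]}

/-- `I` is `x`-tight in `[0, r]`: the `x`-exponents of the generators are exactly
`r, r-1, ..., 1, 0` (i.e. `a (r - i) = i`). -/
def xTight (I : Set (Mon 2)) (r : ℕ) : Prop :=
  ∃ b : ℕ → ℕ, yxTightGens r (fun i => r - i) b I

/-- `I` is `y`-tight in `[0, s]`: the `y`-exponents of the generators are exactly
`0, 1, ..., s`. -/
def yTight (I : Set (Mon 2)) (s : ℕ) : Prop :=
  ∃ a : ℕ → ℕ, yxTightGens s a (fun i => i) I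

/-- `I` is `yx`-tight: there is `0 ≤ j ≤ m` with `b i = i` for `i = 0,...,j` and
`a (m - i) = i` for `i = 0,...,m-j`. -/
def yxTight (I : Set (Mon 2)) : Prop :=
  ∃ (m : ℕ) (a b : ℕ → ℕ), yxTightGens m a b I ∧
    ∃ j ≤ m, (∀ i ≤ j, b i = i) ∧ ∀ i ≤ m - j, a (m - i) = i

/-- Powers of a monomial ideal. -/
def powIdeal {n : ℕ} (I : Set (Mon n)) : ℕ → Set (Mon n)
  | 0 => Set.univ
  | k + 1 => mulIdeal (powIdeal I k) I

-- auxiliary lemmas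
lemma eq_of_le_deg {n : ℕ} {u v : Mon n} (h : u ≤ v) (hd : degree v ≤ degree u) : u = v := by
  funext k
  by_contra hk
  have hk' : u k < v k := lt_of_le_of_ne (h k) hk
  have : degree u < degree v :=
    Finset.sum_lt_sum (fun i _ => h i) ⟨k, Finset.mem_univ k, hk'⟩
  omega

lemma degree_add {n : ℕ} (u w : Mon n) : degree (u + w) = degree u + degree w := by
  simp [degree, Finset.sum_add_distrib]

lemma degree_exch {n : ℕ} {v : Mon n} {i j : Fin n} (hij : i ≠ j) (hv : 1 ≤ v i) :
    degree (exch v i j) = degree v := by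
  have key : ∀ k, exch v i j k + (if k = i then 1 else 0)
      = v k + (if k = j then 1 else 0) := by
    intro k
    simp only [exch]
    rcases eq_or_ne k i with rfl | hki
    · simp [hij]
      omega
    · rcases eq_or_ne k j with rfl | hkj
      · simp [hki]
      · simp [hki, hkj]
  have hsum : ∀ (a : Fin n), ∑ k, (if k = a then 1 else 0) = 1 := by
    intro a; simp
  have h1 : (∑ k, exch v i j k) + 1 = (∑ k, v k) + 1 := by
    calc (∑ k, exch v i j k) + 1
        = ∑ k, (exch v i j k + (if k = i then 1 else 0)) := by
          rw [Finset.sum_add_distrib, hsum i]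
      _ = ∑ k, (v k + (if k = j then 1 else 0)) :=
          Finset.sum_congr rfl (fun k _ => key k)
      _ = (∑ k, v k) + 1 := by rw [Finset.sum_add_distrib, hsum j]
  simp only [degree]
  omega

lemma minGens_component {n : ℕ} (I : Set (Mon n)) (d : ℕ) :
    minGens (component I d) = {u | u ∈ I ∧ degree u = d} := by
  ext w
  constructor
  · rintro ⟨⟨u, hu, hud, hle⟩, hmin⟩
    have : u ∈ component I d := ⟨u, hu, hud, le_refl u⟩
    have := hmin u this hle
    subst this
    exact ⟨hu, hud⟩
  · rintro ⟨hw, hwd⟩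
    refine ⟨⟨w, hw, hwd, le_refl w⟩, ?_⟩
    rintro v ⟨u, hu, hud, hle⟩ hvw
    have huw : u = w := eq_of_le_deg (le_trans hle hvw) (by omega)
    subst huw
    exact le_antisymm hvw hle

lemma mem_component_iff {n : ℕ} {I : Set (Mon n)} {w : Mon n} {d : ℕ} (hw : degree w = d) :
    w ∈ component I d ↔ w ∈ I := by
  constructor
  · rintro ⟨u, hu, hud, hle⟩
    have : u = w := eq_of_le_deg hle (by omega)
    subst this; exact hu
  · intro h; exact ⟨w, h, hw, le_refl w⟩

/-- P: equal-degree exchange -/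
def Pexch {n : ℕ} (I : Set (Mon n)) : Prop :=
  ∀ u ∈ I, ∀ v ∈ I, degree u = degree v → ∀ i : Fin n, v i < u i →
    ∃ j : Fin n, u j < v j ∧ exch u i j ∈ I

lemma cp_iff_P {n : ℕ} (I : Set (Mon n)) :
    ComponentwisePolymatroidal I ↔ Pexch I := by
  constructor
  · intro h u hu v hv hdeg i hi
    have hu' : u ∈ minGens (component I (degree u)) := by
      rw [minGens_component]; exact ⟨hu, rfl⟩
    have hv' : v ∈ minGens (component I (degree u)) := by
      rw [minGens_component]; exact ⟨hv, hdeg.symm⟩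
    obtain ⟨j, hj, hmem⟩ := (h (degree u)).2 u hu' v hv' i hi
    have hij : i ≠ j := by rintro rfl; omega
    have hdx : degree (exch u i j) = degree u := degree_exch hij (by omega)
    exact ⟨j, hj, (mem_component_iff hdx).1 hmem⟩
  · intro hP d
    constructor
    · exact ⟨d, fun u hu => by rw [minGens_component] at hu; exact hu.2⟩
    · intro u hu v hv i hi
      rw [minGens_component] at hu hv
      obtain ⟨huI, hud⟩ := hu
      obtain ⟨hvI, hvd⟩ := hv
      obtain ⟨j, hj, hmem⟩ := hP u huI v hvI (by omega) i hi
      have hij : i ≠ j := by rintro rfl; omega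
      have hdx : degree (exch u i j) = degree u := degree_exch hij (by omega)
      exact ⟨j, hj, (mem_component_iff (by omega)).2 hmem⟩

lemma exists_le_sum {n : ℕ} (c : Mon n) (d : ℕ) (h : d ≤ degree c) :
    ∃ w : Mon n, w ≤ c ∧ degree w = d := by
  induction d with
  | zero => exact ⟨0, fun k => Nat.zero_le _, by simp [degree]⟩
  | succ d ih =>
    obtain ⟨w, hw, hwd⟩ := ih (by omega)
    have hex : ∃ k, w k < c k := by
      by_contra hc
      push_neg at hc
      have : degree c ≤ degree w := Finset.sum_le_sum (fun i _ => hc i)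
      omega
    obtain ⟨k, hk⟩ := hex
    refine ⟨Function.update w k (w k + 1), ?_, ?_⟩
    · intro m
      by_cases hm : m = k
      · subst hm; simp [Function.update_self]; omega
      · simp [Function.update_of_ne hm]; exact hw m
    · have h1 : degree (Function.update w k (w k + 1)) =
          (w k + 1) + ∑ m ∈ Finset.univ \ {k}, w m := by
        simp [degree, Finset.sum_update_of_mem (Finset.mem_univ k)]
      have h2 : degree w = w k + ∑ m ∈ Finset.univ \ {k}, w m := by
        rw [← Finset.erase_eq]
        exact (Finset.add_sum_erase _ w (Finset.mem_univ k)).symm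
      omega

/-- a monomial ideal is componentwise polymatroidal iff for all `u, v ∈ I`
with `deg u ≤ deg v` and `u ∤ v`, for every `i` with `deg_{x_i} v > deg_{x_i} u` there is
`j` with `deg_{x_j} v < deg_{x_j} u` and `x_j * (v / x_i) ∈ I`. -/
theorem stmt_0 {n : ℕ} (I : Set (Mon n)) (hI : IsMonomialIdeal I) :
    ComponentwisePolymatroidal I ↔
      (∀ u ∈ I, ∀ v ∈ I, degree u ≤ degree v → ¬ u ≤ v →
        ∀ i : Fin n, u i < v i → ∃ j : Fin n, v j < u j ∧ exch v i j ∈ I) := by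
  rw [cp_iff_P]
  constructor
  · intro hP u hu v hv hdeg hnle i hi
    obtain ⟨k₀, hk₀⟩ : ∃ k, v k < u k := by
      by_contra hc; push_neg at hc; exact hnle (fun k => hc k)
    set c : Mon n := fun k => if k = i then v i - u i - 1 else v k - u k with hcdef
    have hkey : ∀ k, c k + (if k = i then 1 else 0) = v k - u k := by
      intro k
      rcases eq_or_ne k i with rfl | hki
      · simp [hcdef]; omega
      · simp [hcdef, hki]
    have hceq : degree c + 1 = degree (fun k => v k - u k : Mon n) := by
      have : ∑ k, (c k + (if k = i then 1 else 0)) = ∑ k, (v k - u k) :=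
        Finset.sum_congr rfl (fun k _ => hkey k)
      have h2 : (∑ k, c k) + 1 = ∑ k, (v k - u k) := by
        rw [← this, Finset.sum_add_distrib]
        simp
      simpa [degree] using h2
    have hsum1 : degree v < degree (fun k => v k - u k : Mon n) + degree u := by
      have hle : ∀ m : Fin n, v m ≤ (v m - u m) + u m := fun m => by omega
      have hlt : v k₀ < (v k₀ - u k₀) + u k₀ := by omega
      have := Finset.sum_lt_sum (fun m _ => hle m) ⟨k₀, Finset.mem_univ k₀, hlt⟩
      simpa [degree, Finset.sum_add_distrib] using this
    obtain ⟨w, hw, hwd⟩ := exists_le_sum c (degree v - degree u) (by omega)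
    have hu' : u + w ∈ I := hI u hu w
    have hdeq : degree v = degree (u + w) := by
      rw [degree_add]; omega
    have hadd : ∀ m, (u + w) m = u m + w m := fun m => rfl
    have hwi : w i ≤ v i - u i - 1 := by
      have := hw i; simpa [hcdef] using this
    have hui : (u + w) i < v i := by rw [hadd]; omega
    obtain ⟨j, hj, hmem⟩ := hP v hv (u + w) hu' hdeq i hui
    have hji : j ≠ i := by
      intro h; rw [h] at hj; omega
    have hwj : w j ≤ v j - u j := by
      have := hw j; simpa [hcdef, hji] using this
    rw [hadd] at hj
    exact ⟨j, by omega, hmem⟩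
  · intro hQ u hu v hv hdeg i hi
    have hnle : ¬ v ≤ u := by
      intro hle
      have := eq_of_le_deg hle (by omega)
      rw [this] at hi
      omega
    exact hQ v hv u hu (by omega) hnle i hi
end

section
/- For a monomial ideal I in K[x,y], the following are equivalent: (1) I satisfies the non-pure dual exchange property; (2) I satisfies the non-pure exchange property; (3) I is componentwise polymatroidal. -/
lemma fin2_cases : ∀ (i j k : Fin 2), i ≠ j → k = i ∨ k = j := by decide

lemma exists_other : ∀ i : Fin 2, ∃ j, i ≠ j := by decide

lemma mem_of_le {n : ℕ} {I : Set (Mon n)} (hI : IsMonomialIdeal I) {z t : Mon n}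
    (hz : z ∈ I) (h : z ≤ t) : t ∈ I := by
  have h2 : z + (t - z) = t := by
    funext k
    have := Pi.le_def.mp h k
    simp only [Pi.add_apply, Pi.sub_apply]
    omega
  have := hI z hz (t - z)
  rwa [h2] at this

lemma deg_mono {n : ℕ} {w t : Mon n} (h : w ≤ t) : degree w ≤ degree t :=
  Finset.sum_le_sum fun i _ => h i

lemma deg_lt {n : ℕ} {w t : Mon n} (h : w ≤ t) (hne : w ≠ t) : degree w < degree t := by
  have hex : ∃ k, w k < t k := by
    by_contra hc
    push_neg at hc
    exact hne (funext fun k => le_antisymm (h k) (hc k))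
  obtain ⟨k, hk⟩ := hex
  exact Finset.sum_lt_sum (fun i _ => h i) ⟨k, Finset.mem_univ k, hk⟩

lemma eq_of_le_of_deg {n : ℕ} {w t : Mon n} (h : w ≤ t) (hd : degree w = degree t) : w = t := by
  by_contra hne
  exact absurd hd (Nat.ne_of_lt (deg_lt h hne))

lemma exists_minGen_aux {n : ℕ} {I : Set (Mon n)} :
    ∀ d u, degree u ≤ d → u ∈ I → ∃ g ∈ minGens I, g ≤ u := by
  intro d
  induction d with
  | zero =>
    intro u hd hu
    refine ⟨u, ⟨hu, fun v hv hvu => ?_⟩, le_refl u⟩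
    by_contra hne
    have := deg_lt hvu hne
    omega
  | succ d ih =>
    intro u hd hu
    by_cases hmin : ∀ v ∈ I, v ≤ u → v = u
    · exact ⟨u, ⟨hu, hmin⟩, le_refl u⟩
    · push_neg at hmin
      obtain ⟨v, hv, hvu, hne⟩ := hmin
      have := deg_lt hvu hne
      obtain ⟨g, hg, hgv⟩ := ih v (by omega) hv
      exact ⟨g, hg, hgv.trans hvu⟩

lemma exists_minGen {n : ℕ} {I : Set (Mon n)} (u : Mon n) (hu : u ∈ I) :
    ∃ g ∈ minGens I, g ≤ u := exists_minGen_aux (degree u) u le_rfl hu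

lemma deg2 {i j : Fin 2} (hij : i ≠ j) (w : Mon 2) : degree w = w i + w j := by
  fin_cases i <;> fin_cases j <;>
    simp_all [degree, Fin.sum_univ_two] <;> omega

lemma exch_at_i {n : ℕ} (v : Mon n) (i j : Fin n) : exch v i j i = v i - 1 := by
  simp [exch]

lemma exch_at_j {n : ℕ} (v : Mon n) {i j : Fin n} (hij : i ≠ j) : exch v i j j = v j + 1 := by
  simp [exch, hij.symm]

lemma core {I : Set (Mon 2)} (hI : IsMonomialIdeal I) (hE : NonPureExchange I)
    {i j : Fin 2} (hij : i ≠ j) :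
    ∀ M d (u v h : Mon 2), u ∈ I → v ∈ I → degree u = d → degree v = d →
      v i < u i → h ∈ minGens I → h ≤ v →
      (u i - v i) * (d + 1) + h j ≤ M → exch u i j ∈ I := by
  intro M
  induction M with
  | zero =>
    intro d u v h _ _ _ _ hvi _ _ hM
    have h1 : 1 * (d + 1) ≤ (u i - v i) * (d + 1) := Nat.mul_le_mul_right _ (by omega)
    omega
  | succ M ih =>
    intro d u v h huI hvI hud hvd hvi hhg hhv
    intro hM
    have du : degree u = u i + u j := deg2 hij u
    have dv : degree v = v i + v j := deg2 hij v
    have hhv' := Pi.le_def.mp hhv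
    by_cases hc : u i = v i + 1
    · have he : exch u i j = v := by
        funext k
        rcases fin2_cases i j k hij with rfl | rfl
        · rw [exch_at_i]; omega
        · rw [exch_at_j u hij]; omega
      rwa [he]
    · have hc2 : v i + 2 ≤ u i := by omega
      obtain ⟨g, hgmin, hgu⟩ := exists_minGen u huI
      have hgu' := Pi.le_def.mp hgu
      by_cases hgi : g i < u i
      · refine mem_of_le hI hgmin.1 (Pi.le_def.mpr fun k => ?_)
        rcases fin2_cases i j k hij with rfl | rfl
        · rw [exch_at_i]; omega
        · rw [exch_at_j u hij]; have := hgu' k; omega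
      · have hgi' : g i = u i := le_antisymm (hgu' i) (not_lt.mp hgi)
        have hhi : h i < g i := by have := hhv' i; omega
        have hhj : g j < h j := by
          by_contra hle
          push_neg at hle
          have : h ≤ g := Pi.le_def.mpr fun k => by
            rcases fin2_cases i j k hij with rfl | rfl
            · omega
            · exact hle
          have := hgmin.2 h hhg.1 this
          subst this
          omega
        by_cases hdg : degree h ≤ degree g
        · obtain ⟨j', hj'1, hj'2⟩ := hE h hhg g hgmin hdg i hhi
          have hj'j : j' = j := by
            rcases fin2_cases i j j' hij with h' | h'
            · rw [h'] at hj'1; omega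
            · exact h'
          rw [hj'j] at hj'2
          refine mem_of_le hI hj'2 (Pi.le_def.mpr fun k => ?_)
          rcases fin2_cases i j k hij with rfl | rfl
          · rw [exch_at_i, exch_at_i]; omega
          · rw [exch_at_j g hij, exch_at_j u hij]; have := hgu' k; omega
        · push_neg at hdg
          obtain ⟨j', hj'1, hj'2⟩ := hE g hgmin h hhg hdg.le j hhj
          have hj'i : j' = i := by
            rcases fin2_cases i j j' hij with h' | h'
            · exact h'
            · rw [h'] at hj'1; omega
          rw [hj'i] at hj'2
          have hz'I : exch h j i ∈ I := hj'2
          have hz'i : exch h j i i = h i + 1 := exch_at_j h hij.symm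
          have hz'j : exch h j i j = h j - 1 := exch_at_i h j i
          have dh : degree h = h i + h j := deg2 hij h
          have hdh : degree h ≤ d := by
            have := deg_mono hhv
            omega
          by_cases hhivi : h i = v i
          · set z : Mon 2 := exch h j i + (fun k => if k = j then d - degree h else 0) with hz
            have hzI : z ∈ I := hI _ hz'I _
            have hz_i : z i = h i + 1 := by
              simp only [hz, Pi.add_apply, if_neg hij, hz'i, add_zero]
            have hz_j : z j = (h j - 1) + (d - degree h) := by
              simp [hz, Pi.add_apply, hz'j]
            have hz_deg : degree z = d := by
              rw [deg2 hij z, hz_i, hz_j]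
              omega
            obtain ⟨h'', hh''min, hh''z⟩ := exists_minGen z hzI
            refine ih d u z h'' huI hzI hud hz_deg (by omega) hh''min hh''z ?_
            have h1 : h'' j ≤ z j := Pi.le_def.mp hh''z j
            have h2 : z j ≤ d := by
              rw [deg2 hij z] at hz_deg
              omega
            have e : u i - z i = u i - v i - 1 := by omega
            rw [e]
            have key : (u i - v i - 1) * (d + 1) + (d + 1) = (u i - v i) * (d + 1) := by
              have e2 : u i - v i - 1 + 1 = u i - v i := by omega
              calc (u i - v i - 1) * (d + 1) + (d + 1)
                  = (u i - v i - 1 + 1) * (d + 1) := by ring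
                _ = (u i - v i) * (d + 1) := by rw [e2]
            generalize hA : (u i - v i - 1) * (d + 1) = A at key ⊢
            generalize hB : (u i - v i) * (d + 1) = B at key hM
            omega
          · have hhivi' : h i < v i := by have := hhv' i; omega
            have hz'v : exch h j i ≤ v := Pi.le_def.mpr fun k => by
              rcases fin2_cases i j k hij with rfl | rfl
              · rw [hz'i]; omega
              · rw [hz'j]; have := hhv' k; omega
            obtain ⟨h', hh'min, hh'z⟩ := exists_minGen _ hz'I
            refine ih d u v h' huI hvI hud hvd hvi hh'min (hh'z.trans hz'v) ?_
            have h1 : h' j ≤ h j - 1 := by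
              have := Pi.le_def.mp hh'z j
              omega
            generalize hB : (u i - v i) * (d + 1) = B at hM ⊢
            omega

/-- for a monomial ideal in `K[x,y]`, the non-pure dual exchange property,
the non-pure exchange property and being componentwise polymatroidal are equivalent. -/
theorem stmt_5 (I : Set (Mon 2)) (hI : IsMonomialIdeal I) :
    (NonPureDualExchange I ↔ NonPureExchange I) ∧
    (NonPureExchange I ↔ ComponentwisePolymatroidal I) := by
  have part2 : NonPureExchange I ↔ ComponentwisePolymatroidal I := by
    constructor
    · intro hE d
      constructor
      · exact ⟨d, fun u hu => by rw [minGens_component] at hu; exact hu.2⟩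
      · intro u hu v hv i hvi
        rw [minGens_component] at hu hv
        obtain ⟨huI, hud⟩ := hu
        obtain ⟨hvI, hvd⟩ := hv
        obtain ⟨j, hij⟩ := exists_other i
        have du := deg2 hij u
        have dv := deg2 hij v
        have huj : u j < v j := by omega
        obtain ⟨h, hhmin, hhv⟩ := exists_minGen v hvI
        have hex : exch u i j ∈ I :=
          core hI hE hij ((u i - v i) * (d + 1) + h j) d u v h huI hvI hud hvd hvi
            hhmin hhv le_rfl
        refine ⟨j, huj, ⟨exch u i j, hex, ?_, le_refl _⟩⟩
        rw [deg2 hij (exch u i j), exch_at_i, exch_at_j u hij]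
        omega
    · intro hCP u hu v hv hdeg i hui
      obtain ⟨j, hij⟩ := exists_other i
      set d := degree v with hd
      have hvj : v j < u j := by
        have hne : ¬ u ≤ v := by
          intro hle
          have := hv.2 u hu.1 hle
          rw [this] at hui; omega
        rw [Pi.le_def] at hne; push_neg at hne
        obtain ⟨k, hk⟩ := hne
        rcases fin2_cases i j k hij with h' | h'
        · rw [h'] at hk; omega
        · rwa [h'] at hk
      set u' : Mon 2 := u + (fun k => if k = j then d - degree u else 0) with hu'
      have hu'I : u' ∈ I := hI u hu.1 _
      have hu'i : u' i = u i := by simp [hu', hij]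
      have hu'j : u' j = u j + (d - degree u) := by simp [hu']
      have hu'd : degree u' = d := by
        have e1 := deg2 hij u
        rw [deg2 hij u', hu'i, hu'j]
        omega
      obtain ⟨hgsd, hpoly⟩ := hCP d
      have hvmem : v ∈ minGens (component I d) := by
        rw [minGens_component]; exact ⟨hv.1, rfl⟩
      have hu'mem : u' ∈ minGens (component I d) := by
        rw [minGens_component]; exact ⟨hu'I, hu'd⟩
      obtain ⟨j', hj'1, hj'2⟩ := hpoly v hvmem u' hu'mem i (by rw [hu'i]; exact hui)
      have hj'j : j' = j := by
        rcases fin2_cases i j j' hij with h' | h'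
        · rw [h', hu'i] at hj'1; omega
        · exact h'
      rw [hj'j] at hj'2
      obtain ⟨w, hwI, hwd, hwle⟩ := hj'2
      have dv := deg2 hij v
      have hde : degree (exch v i j) = d := by
        rw [deg2 hij (exch v i j), exch_at_i, exch_at_j v hij]
        omega
      have hwe : w = exch v i j := eq_of_le_of_deg hwle (by rw [hwd, hde])
      exact ⟨j, hvj, hwe ▸ hwI⟩
  refine ⟨?_, part2⟩
  constructor
  · intro hD u hu v hv hdeg i hui
    obtain ⟨j, hij⟩ := exists_other i
    have hvj : v j < u j := by
      have hne : ¬ u ≤ v := by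
        intro hle
        have := hv.2 u hu.1 hle
        rw [this] at hui; omega
      rw [Pi.le_def] at hne; push_neg at hne
      obtain ⟨k, hk⟩ := hne
      rcases fin2_cases i j k hij with h' | h'
      · rw [h'] at hk; omega
      · rwa [h'] at hk
    obtain ⟨j', hj'1, hj'2⟩ := hD u hu v hv hdeg j hvj
    have hj'i : j' = i := by
      rcases fin2_cases i j j' hij with h' | h'
      · exact h'
      · rw [h'] at hj'1; omega
    rw [hj'i] at hj'2
    exact ⟨j, hvj, hj'2⟩
  · intro hE u hu v hv hdeg i hvi
    obtain ⟨j, hij⟩ := exists_other i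
    have huj : u j < v j := by
      have hne : ¬ v ≤ u := by
        intro hle
        have := hu.2 v hv.1 hle
        rw [this] at hvi; omega
      rw [Pi.le_def] at hne; push_neg at hne
      obtain ⟨k, hk⟩ := hne
      rcases fin2_cases i j k hij with h' | h'
      · rw [h'] at hk; omega
      · rwa [h'] at hk
    obtain ⟨j', hj'1, hj'2⟩ := hE u hu v hv hdeg j huj
    have hj'i : j' = i := by
      rcases fin2_cases i j j' hij with h' | h'
      · exact h'
      · rw [h'] at hj'1; omega
    rw [hj'i] at hj'2
    exact ⟨j, huj, hj'2⟩
end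

section
/- Let I ⊂ K[x,y] be a componentwise polymatroidal ideal with minimal generators u_i = x^{a_i}y^{b_i}, i = 0,...,m, where a_0 > ... > a_m and b_0 < ... < b_m. If deg(u_i) > deg(u_{i+1}) then a_i - 1 > a_{i+1} and b_{i+1} = b_i + 1; if deg(u_i) < deg(u_{i+1}) then b_i + 1 < b_{i+1} and a_{i+1} = a_i - 1; if deg(u_i) = deg(u_{i+1}) then b_{i+1} = b_i + 1 and a_{i+1} = a_i - 1. -/
lemma degree_lt_aux {n : ℕ} {u v : Mon n} (h : u ≤ v) (hne : u ≠ v) : degree u < degree v := by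
  have hex : ∃ k, u k < v k := by
    by_contra hc
    push_neg at hc
    exact hne (funext fun k => le_antisymm (h k) (hc k))
  obtain ⟨k, hk⟩ := hex
  exact Finset.sum_lt_sum (fun i _ => h i) ⟨k, Finset.mem_univ k, hk⟩

lemma exists_minGen_le_aux {n : ℕ} {I : Set (Mon n)} :
    ∀ d, ∀ w ∈ I, degree w ≤ d → ∃ v ∈ minGens I, v ≤ w := by
  intro d
  induction d with
  | zero =>
    intro w hw hd
    refine ⟨w, ⟨hw, fun v hv hle => ?_⟩, le_refl w⟩
    by_contra hne
    have := degree_lt_aux hle hne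
    omega
  | succ d ih =>
    intro w hw hd
    by_cases hm : w ∈ minGens I
    · exact ⟨w, hm, le_refl w⟩
    · have hex : ∃ v ∈ I, v ≤ w ∧ v ≠ w := by
        by_contra hc
        push_neg at hc
        exact hm ⟨hw, fun v hv hle => hc v hv hle⟩
      obtain ⟨v, hvI, hvw, hvne⟩ := hex
      have hdv : degree v ≤ d := by have := degree_lt_aux hvw hvne; omega
      obtain ⟨g, hg, hgle⟩ := ih v hvI hdv
      exact ⟨g, hg, le_trans hgle hvw⟩

lemma exists_minGen_le {n : ℕ} {I : Set (Mon n)} {w : Mon n} (hw : w ∈ I) :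
    ∃ v ∈ minGens I, v ≤ w :=
  exists_minGen_le_aux (degree w) w hw le_rfl

lemma component_subset {n : ℕ} {I : Set (Mon n)} (hI : IsMonomialIdeal I) (d : ℕ) :
    component I d ⊆ I := by
  rintro w ⟨u, huI, _, hle⟩
  have h : u + (fun k => w k - u k) = w := funext fun k => Nat.add_sub_cancel' (hle k)
  exact h ▸ hI u huI _

lemma mem_minGens_component {n : ℕ} {I : Set (Mon n)} {d : ℕ} {w : Mon n}
    (hw : w ∈ I) (hd : degree w = d) : w ∈ minGens (component I d) := by
  refine ⟨⟨w, hw, hd, le_refl w⟩, ?_⟩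
  rintro v ⟨u, huI, hdu, hle⟩ hvw
  have huw : u ≤ w := le_trans hle hvw
  have heq : u = w := by
    by_contra hne
    have := degree_lt_aux huw hne
    omega
  exact le_antisymm hvw (heq ▸ hle)

lemma key1 (I : Set (Mon 2)) (hI : IsMonomialIdeal I)
    (hcp : ComponentwisePolymatroidal I)
    (m : ℕ) (a b : ℕ → ℕ)
    (horder : ∀ i k : ℕ, i ≤ m → k ≤ m → i < k → a k < a i ∧ b i < b k)
    (hgens : minGens I = {u | ∃ i ≤ m, u = ![a i, b i]})
    (i : ℕ) (hi : i < m) (hdeg : a (i+1) + b (i+1) ≤ a i + b i) :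
    b (i+1) = b i + 1 := by
  obtain ⟨d, hd⟩ : ∃ d, d = a i + b i := ⟨_, rfl⟩
  obtain ⟨hab, hba⟩ := horder i (i+1) (by omega) (by omega) (by omega)
  have hu : (![a i, b i] : Mon 2) ∈ minGens I := by
    rw [hgens]; exact ⟨i, by omega, rfl⟩
  have hu' : (![a (i+1), b (i+1)] : Mon 2) ∈ minGens I := by
    rw [hgens]; exact ⟨i+1, by omega, rfl⟩
  have hvI : (![a (i+1), d - a (i+1)] : Mon 2) ∈ I := by
    have h := hI _ hu'.1 ![0, d - (a (i+1) + b (i+1))]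
    have heq : (![a (i+1), b (i+1)] : Mon 2) + ![0, d - (a (i+1) + b (i+1))]
        = ![a (i+1), d - a (i+1)] := by
      funext k
      fin_cases k <;> simp [Pi.add_apply] <;> omega
    rwa [heq] at h
  have hdu : degree (![a i, b i] : Mon 2) = d := by
    simp [degree, Fin.sum_univ_two]; omega
  have hdv : degree (![a (i+1), d - a (i+1)] : Mon 2) = d := by
    simp [degree, Fin.sum_univ_two]; omega
  obtain ⟨_, hex⟩ := hcp d
  obtain ⟨j, hj1, hj2⟩ := hex _ (mem_minGens_component hu.1 hdu)
      _ (mem_minGens_component hvI hdv) 0 (by simpa using hab)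
  fin_cases j
  · simp at hj1; omega
  · have hw : exch (![a i, b i] : Mon 2) 0 1 = ![a i - 1, b i + 1] := by
      funext k
      fin_cases k <;> simp [exch]
    have hj2' : exch (![a i, b i] : Mon 2) 0 1 ∈ component I d := hj2
    rw [hw] at hj2'
    have hwI : (![a i - 1, b i + 1] : Mon 2) ∈ I := component_subset hI d hj2'
    obtain ⟨g, hg, hgle⟩ := exists_minGen_le hwI
    rw [hgens] at hg
    obtain ⟨k, hk, rfl⟩ := hg
    have h0 : a k ≤ a i - 1 := by simpa using hgle 0
    have h1 : b k ≤ b i + 1 := by simpa using hgle 1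
    have hik : i < k := by
      by_contra h
      push_neg at h
      rcases lt_or_eq_of_le h with h | h
      · have := (horder k i (by omega) (by omega) h).1; omega
      · subst h; omega
    have hk1 : b (i+1) ≤ b k := by
      rcases lt_or_eq_of_le (show i+1 ≤ k by omega) with h | h
      · exact ((horder (i+1) k (by omega) hk h).2).le
      · subst h; omega
    omega

lemma key2 (I : Set (Mon 2)) (hI : IsMonomialIdeal I)
    (hcp : ComponentwisePolymatroidal I)
    (m : ℕ) (a b : ℕ → ℕ)
    (horder : ∀ i k : ℕ, i ≤ m → k ≤ m → i < k → a k < a i ∧ b i < b k)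
    (hgens : minGens I = {u | ∃ i ≤ m, u = ![a i, b i]})
    (i : ℕ) (hi : i < m) (hdeg : a i + b i ≤ a (i+1) + b (i+1)) :
    a i = a (i+1) + 1 := by
  obtain ⟨d, hd⟩ : ∃ d, d = a (i+1) + b (i+1) := ⟨_, rfl⟩
  obtain ⟨hab, hba⟩ := horder i (i+1) (by omega) (by omega) (by omega)
  have hu : (![a i, b i] : Mon 2) ∈ minGens I := by
    rw [hgens]; exact ⟨i, by omega, rfl⟩
  have hu' : (![a (i+1), b (i+1)] : Mon 2) ∈ minGens I := by
    rw [hgens]; exact ⟨i+1, by omega, rfl⟩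
  have hvI : (![d - b i, b i] : Mon 2) ∈ I := by
    have h := hI _ hu.1 ![d - (a i + b i), 0]
    have heq : (![a i, b i] : Mon 2) + ![d - (a i + b i), 0]
        = ![d - b i, b i] := by
      funext k
      fin_cases k <;> simp [Pi.add_apply] <;> omega
    rwa [heq] at h
  have hdu : degree (![a (i+1), b (i+1)] : Mon 2) = d := by
    simp [degree, Fin.sum_univ_two]; omega
  have hdv : degree (![d - b i, b i] : Mon 2) = d := by
    simp [degree, Fin.sum_univ_two]; omega
  obtain ⟨_, hex⟩ := hcp d
  obtain ⟨j, hj1, hj2⟩ := hex _ (mem_minGens_component hu'.1 hdu)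
      _ (mem_minGens_component hvI hdv) 1 (by simpa using hba)
  fin_cases j
  · have hw : exch (![a (i+1), b (i+1)] : Mon 2) 1 0 = ![a (i+1) + 1, b (i+1) - 1] := by
      funext k
      fin_cases k <;> simp [exch]
    have hj2' : exch (![a (i+1), b (i+1)] : Mon 2) 1 0 ∈ component I d := hj2
    rw [hw] at hj2'
    have hwI : (![a (i+1) + 1, b (i+1) - 1] : Mon 2) ∈ I := component_subset hI d hj2'
    obtain ⟨g, hg, hgle⟩ := exists_minGen_le hwI
    rw [hgens] at hg
    obtain ⟨k, hk, rfl⟩ := hg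
    have h0 : a k ≤ a (i+1) + 1 := by simpa using hgle 0
    have h1 : b k ≤ b (i+1) - 1 := by simpa using hgle 1
    have hik : k ≤ i := by
      by_contra h
      push_neg at h
      rcases lt_or_eq_of_le (show i+1 ≤ k by omega) with h2 | h2
      · have := (horder (i+1) k (by omega) hk h2).2; omega
      · subst h2; omega
    have hk1 : a i ≤ a k := by
      rcases lt_or_eq_of_le hik with h2 | h2
      · exact ((horder k i (by omega) (by omega) h2).1).le
      · subst h2; omega
    omega
  · simp at hj1; omega

/-- for a componentwise polymatroidal ideal in `K[x,y]` with generators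
`u_i = x^{a i} y^{b i}`: if `deg u_i > deg u_{i+1}` then `a i - 1 > a (i+1)` and
`b (i+1) = b i + 1`; if `deg u_i < deg u_{i+1}` then `b i + 1 < b (i+1)` and
`a (i+1) = a i - 1`; if the degrees are equal then `b (i+1) = b i + 1` and
`a (i+1) = a i - 1`. -/
theorem stmt_6 (I : Set (Mon 2)) (hI : IsMonomialIdeal I)
    (hcp : ComponentwisePolymatroidal I)
    (m : ℕ) (a b : ℕ → ℕ)
    (horder : ∀ i k : ℕ, i ≤ m → k ≤ m → i < k → a k < a i ∧ b i < b k)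
    (hgens : minGens I = {u | ∃ i ≤ m, u = ![a i, b i]}) :
    ∀ i : ℕ, i < m →
      ((a (i+1) + b (i+1) < a i + b i → a (i+1) + 1 < a i ∧ b (i+1) = b i + 1) ∧
       (a i + b i < a (i+1) + b (i+1) → b i + 1 < b (i+1) ∧ a (i+1) + 1 = a i) ∧
       (a i + b i = a (i+1) + b (i+1) → b (i+1) = b i + 1 ∧ a (i+1) + 1 = a i)) := by
  intro i hi
  obtain ⟨hab, hba⟩ := horder i (i+1) (by omega) (by omega) (by omega)
  refine ⟨fun h => ?_, fun h => ?_, fun h => ?_⟩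
  · have := key1 I hI hcp m a b horder hgens i hi (by omega)
    omega
  · have := key2 I hI hcp m a b horder hgens i hi (by omega)
    omega
  · have h1 := key1 I hI hcp m a b horder hgens i hi (by omega)
    have h2 := key2 I hI hcp m a b horder hgens i hi (by omega)
    omega
end

section
/- If I is x-tight in [0,r] and J is y-tight in [0,s] in K[x,y], then IJ = y^s·I + x^r·J. -/
/-- Every element of a set of monomials dominates a minimal generator. -/
lemma exists_minGens_le {n : ℕ} {I : Set (Mon n)} {u : Mon n} (hu : u ∈ I) :
    ∃ g ∈ minGens I, g ≤ u := by
  have H : ∀ d, ∀ u : Mon n, u ∈ I → degree u = d → ∃ g ∈ minGens I, g ≤ u := by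
    intro d
    induction d using Nat.strong_induction_on with
    | _ d ih =>
      intro u hu hd
      by_cases h : ∀ v ∈ I, v ≤ u → v = u
      · exact ⟨u, ⟨hu, h⟩, le_refl u⟩
      · push_neg at h
        obtain ⟨v, hv, hvu, hne⟩ := h
        have hlt : degree v < d := by
          subst hd
          apply Finset.sum_lt_sum (fun i _ => hvu i)
          by_contra hc
          push_neg at hc
          exact hne (funext fun i => le_antisymm (hvu i) (hc i (Finset.mem_univ i)))
        obtain ⟨g, hg, hgv⟩ := ih _ hlt v hv rfl
        exact ⟨g, hg, hgv.trans hvu⟩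
  exact H (degree u) u hu rfl

lemma mem_of_le_s10 {n : ℕ} {I : Set (Mon n)} (hI : IsMonomialIdeal I) {g u : Mon n}
    (hg : g ∈ I) (hgu : g ≤ u) : u ∈ I := by
  have h := hI g hg (u - g)
  have heq : g + (u - g) = u := funext fun i => by
    have h2 : g i ≤ u i := hgu i
    simp only [Pi.add_apply, Pi.sub_apply]
    omega
  rwa [heq] at h

lemma le_two {w : Mon 2} {p q : ℕ} : (![p, q] : Mon 2) ≤ w ↔ p ≤ w 0 ∧ q ≤ w 1 := by
  constructor
  · intro h
    exact ⟨by simpa using h 0, by simpa using h 1⟩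
  · rintro ⟨h0, h1⟩ i
    fin_cases i <;> simpa

/-- if `I` is `x`-tight in `[0,r]` and `J` is `y`-tight in `[0,s]`, then
`I·J = y^s·I + x^r·J`. -/
theorem stmt_10 (I J : Set (Mon 2)) (hI : IsMonomialIdeal I) (hJ : IsMonomialIdeal J)
    (r s : ℕ) (hx : xTight I r) (hy : yTight J s) :
    mulIdeal I J = mulMon ![0, s] I ∪ mulMon ![r, 0] J := by
  obtain ⟨b, hab, -, hb0, hminI⟩ := hx
  obtain ⟨c, hc, hcs, -, hminJ⟩ := hy
  -- monotonicity facts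
  have hbmono : ∀ k ≤ r, ∀ i ≤ k, b i + (k - i) ≤ b k := by
    intro k
    induction k with
    | zero => intro _ i hi; interval_cases i; simp
    | succ k ihk =>
      intro hk i hi
      rcases Nat.eq_or_lt_of_le hi with h | h
      · subst h; simp
      · have h1 := ihk (by omega) i (by omega)
        have h2 := (hab k (k + 1) (by omega) (by omega) (by omega)).2
        omega
  have hcmono : ∀ k ≤ s, ∀ i ≤ k, c k + (k - i) ≤ c i := by
    intro k
    induction k with
    | zero => intro _ i hi; interval_cases i; simp
    | succ k ihk =>
      intro hk i hi
      rcases Nat.eq_or_lt_of_le hi with h | h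
      · subst h; simp
      · have h1 := ihk (by omega) i (by omega)
        have h2 := (hc k (k + 1) (by omega) (by omega) (by omega)).1
        omega
  -- membership characterizations
  have hImem : ∀ u : Mon 2, u ∈ I ↔ ∃ i ≤ r, r - i ≤ u 0 ∧ b i ≤ u 1 := by
    intro u
    constructor
    · intro hu
      obtain ⟨g, hg, hgu⟩ := exists_minGens_le hu
      have := hminI ▸ hg
      obtain ⟨i, hi, rfl⟩ := this
      rw [le_two] at hgu
      exact ⟨i, hi, hgu.1, hgu.2⟩
    · rintro ⟨i, hi, h0, h1⟩
      have hg : (![r - i, b i] : Mon 2) ∈ minGens I := by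
        rw [hminI]; exact ⟨i, hi, rfl⟩
      exact mem_of_le_s10 hI hg.1 (le_two.mpr ⟨h0, h1⟩)
  have hJmem : ∀ v : Mon 2, v ∈ J ↔ ∃ k ≤ s, c k ≤ v 0 ∧ k ≤ v 1 := by
    intro v
    constructor
    · intro hv
      obtain ⟨g, hg, hgv⟩ := exists_minGens_le hv
      have := hminJ ▸ hg
      obtain ⟨k, hk, rfl⟩ := this
      rw [le_two] at hgv
      exact ⟨k, hk, hgv.1, hgv.2⟩
    · rintro ⟨k, hk, h0, h1⟩
      have hg : (![c k, k] : Mon 2) ∈ minGens J := by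
        rw [hminJ]; exact ⟨k, hk, rfl⟩
      exact mem_of_le_s10 hJ hg.1 (le_two.mpr ⟨h0, h1⟩)
  have hsJ : (![0, s] : Mon 2) ∈ J := by
    rw [hJmem]
    exact ⟨s, le_refl s, by simp [hcs], by simp⟩
  have hrI : (![r, 0] : Mon 2) ∈ I := by
    rw [hImem]
    exact ⟨0, Nat.zero_le r, by simp, by simp [hb0]⟩
  ext w
  simp only [mulIdeal, mulMon, Set.mem_union, Set.mem_image, Set.mem_setOf_eq]
  constructor
  · rintro ⟨u, hu, v, hv, rfl⟩
    obtain ⟨i, hir, hiu0, hiu1⟩ := (hImem u).1 hu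
    obtain ⟨k, hks, hkv0, hkv1⟩ := (hJmem v).1 hv
    have hbi : i ≤ b i := by have := hbmono i hir 0 (Nat.zero_le i); omega
    have hck : s - k ≤ c k := by have := hcmono s (le_refl s) k hks; omega
    by_cases hv1 : s ≤ v 1
    · -- Case 1: use y^s * I
      left
      refine ⟨![u 0 + v 0, u 1 + v 1 - s], ?_, ?_⟩
      · rw [hImem]
        exact ⟨i, hir, by simp; omega, by simp; omega⟩
      · funext j
        fin_cases j <;> simp [Pi.add_apply] <;> omega
    · push_neg at hv1
      -- improve k to v 1
      have hcv1 : c (v 1) ≤ v 0 := by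
        have := hcmono (v 1) (by omega) k hkv1
        omega
      by_cases hu0 : r ≤ u 0
      · -- Case 2a: use x^r * J
        right
        refine ⟨![u 0 + v 0 - r, u 1 + v 1], ?_, ?_⟩
        · rw [hJmem]
          exact ⟨k, hks, by simp; omega, by simp; omega⟩
        · funext j
          fin_cases j <;> simp [Pi.add_apply] <;> omega
      · push_neg at hu0
        -- improve i to r - u 0
        have hbu0 : b (r - u 0) ≤ u 1 := by
          have := hbmono i hir (r - u 0) (by omega)
          omega
        have hbru : r - u 0 ≤ b (r - u 0) := by
          have := hbmono (r - u 0) (by omega) 0 (Nat.zero_le _)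
          omega
        by_cases hw0 : r ≤ u 0 + v 0
        · -- use x^r * J
          right
          by_cases hw1 : s ≤ u 1 + v 1
          · refine ⟨![u 0 + v 0 - r, u 1 + v 1], ?_, ?_⟩
            · rw [hJmem]
              exact ⟨s, le_refl s, by simp [hcs], by simp; omega⟩
            · funext j
              fin_cases j <;> simp [Pi.add_apply] <;> omega
          · push_neg at hw1
            have hkey : c (u 1 + v 1) + (u 1 + v 1 - v 1) ≤ c (v 1) :=
              hcmono (u 1 + v 1) (by omega) (v 1) (by omega)
            refine ⟨![u 0 + v 0 - r, u 1 + v 1], ?_, ?_⟩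
            · rw [hJmem]
              exact ⟨u 1 + v 1, by omega, by simp; omega, by simp⟩
            · funext j
              fin_cases j <;> simp [Pi.add_apply] <;> omega
        · -- use y^s * I
          push_neg at hw0
          left
          have hkey : b (r - (u 0 + v 0)) + (r - u 0 - (r - (u 0 + v 0))) ≤ b (r - u 0) :=
            hbmono (r - u 0) (by omega) (r - (u 0 + v 0)) (by omega)
          refine ⟨![u 0 + v 0, u 1 + v 1 - s], ?_, ?_⟩
          · rw [hImem]
            exact ⟨r - (u 0 + v 0), by omega, by simp; omega, by simp; omega⟩
          · funext j
            fin_cases j <;> simp [Pi.add_apply] <;> omega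
  · rintro (⟨u, hu, rfl⟩ | ⟨v, hv, rfl⟩)
    · exact ⟨u, hu, ![0, s], hsJ, add_comm _ _⟩
    · exact ⟨![r, 0], hrI, v, hv, rfl⟩
end
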